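/- Let β = [[−a, l, 0], [m, A, −𝕁ᵗl], [0, −ᵗm𝕁, a]] be an element of 𝔰𝔬(2,n+1) in the displayed block form, and assume β² = −Id_{n+3}. Then for every w ∈ ℝ^{n+1} with l·w = 0 and ᵗm𝕁w = 0 (i.e. w in the 𝕁-orthogonal complement W of span{m, 𝕁ᵗl}), one has A(A·w) = −w; that is, the restriction of A to W is a complex structure. -/
import Mathlib


open Matrix

/- Setup: the Lie algebra 𝔰𝔬(2,n+1) in block form.  The index type of the
(n+3)×(n+3) matrices is `Fin 1 ⊕ (Fin (n+1) ⊕ Fin 1)`, corresponding to the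
decomposition ℝ^{n+3} = ℝ ⊕ ℝ^{n+1} ⊕ ℝ. -/

/-- The index type for (n+3)×(n+3) block matrices. -/
abbrev Idx (n : ℕ) := Fin 1 ⊕ (Fin (n + 1) ⊕ Fin 1)

/-- The Minkowski Gram matrix 𝕁 = diag(−1, 1, …, 1) of signature (1,n) on ℝ^{n+1}. -/
def MinkJ (n : ℕ) : Matrix (Fin (n + 1)) (Fin (n + 1)) ℝ :=
  Matrix.diagonal fun i => if i = 0 then (-1 : ℝ) else 1

/-- The block matrix β = [[−a, l, 0], [m, A, −𝕁ᵗl], [0, −ᵗm𝕁, a]]. -/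
def betaMat (n : ℕ) (a : ℝ) (m l : Fin (n + 1) → ℝ)
    (A : Matrix (Fin (n + 1)) (Fin (n + 1)) ℝ) : Matrix (Idx n) (Idx n) ℝ :=
  Matrix.of fun i j =>
    match i, j with
    | Sum.inl _, Sum.inl _ => -a
    | Sum.inl _, Sum.inr (Sum.inl k) => l k
    | Sum.inl _, Sum.inr (Sum.inr _) => 0
    | Sum.inr (Sum.inl k), Sum.inl _ => m k
    | Sum.inr (Sum.inl k), Sum.inr (Sum.inl k') => A k k'
    | Sum.inr (Sum.inl k), Sum.inr (Sum.inr _) => -((MinkJ n).mulVec l k)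
    | Sum.inr (Sum.inr _), Sum.inl _ => 0
    | Sum.inr (Sum.inr _), Sum.inr (Sum.inl k) => -(Matrix.vecMul m (MinkJ n) k)
    | Sum.inr (Sum.inr _), Sum.inr (Sum.inr _) => a

/-- If β ∈ 𝔰𝔬(2,n+1) in the displayed block form satisfies β² = −Id,
then for every w ∈ ℝ^{n+1} with l·w = 0 and ᵗm𝕁w = 0 (i.e. w in the 𝕁-orthogonal
complement of span{m, 𝕁ᵗl}) one has A(A·w) = −w; the restriction of A to that
complement is a complex structure. -/
theorem stmt2 (n : ℕ) (hn : 1 ≤ n) (a : ℝ) (m l : Fin (n + 1) → ℝ)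
    (A : Matrix (Fin (n + 1)) (Fin (n + 1)) ℝ)
    (hA : Aᵀ * MinkJ n + MinkJ n * A = 0)
    (hβ : betaMat n a m l A * betaMat n a m l A = -1) :
    ∀ w : Fin (n + 1) → ℝ, l ⬝ᵥ w = 0 → m ⬝ᵥ (MinkJ n).mulVec w = 0 →
      A.mulVec (A.mulVec w) = -w := by
  intro w hl hm
  have key : ∀ k k', (A * A) k k' = -(1 : Matrix (Fin (n+1)) (Fin (n+1)) ℝ) k k'
      - m k * l k' - (MinkJ n).mulVec l k * Matrix.vecMul m (MinkJ n) k' := by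
    intro k k'
    have h := congrFun (congrFun hβ (Sum.inr (Sum.inl k))) (Sum.inr (Sum.inl k'))
    simp only [Matrix.mul_apply, Fintype.sum_sum_type, betaMat, Matrix.of_apply,
      Matrix.neg_apply, Matrix.one_apply, Finset.univ_unique, Finset.sum_singleton] at h ⊢
    simp only [Finset.sum_add_distrib, Finset.sum_const, Finset.card_univ,
      Fintype.card_fin, smul_eq_mul, mul_neg, neg_mul, neg_neg, Sum.inr.injEq, Sum.inl.injEq] at h
    linarith [h]
  rw [Matrix.mulVec_mulVec]
  funext k
  have : (A * A).mulVec w k = ∑ k', (A*A) k k' * w k' := by rw [Matrix.mulVec, dotProduct]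
  rw [this]
  simp only [key]
  have e1 : ∑ k', (-(1 : Matrix (Fin (n+1)) (Fin (n+1)) ℝ) k k' - m k * l k'
      - (MinkJ n).mulVec l k * Matrix.vecMul m (MinkJ n) k') * w k'
      = -w k - m k * (l ⬝ᵥ w) - (MinkJ n).mulVec l k * (∑ k', Matrix.vecMul m (MinkJ n) k' * w k') := by
    simp only [sub_mul, Finset.sum_sub_distrib, neg_mul]
    congr 1
    · congr 1
      · simp [Matrix.one_apply, Finset.sum_ite_eq, dotProduct]
      · rw [dotProduct, Finset.mul_sum]
        exact Finset.sum_congr rfl (fun i _ => by ring)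
    · rw [Finset.mul_sum]
      exact Finset.sum_congr rfl (fun i _ => by ring)
  rw [e1, hl]
  have e2 : (∑ k', Matrix.vecMul m (MinkJ n) k' * w k') = m ⬝ᵥ (MinkJ n).mulVec w := by
    simp [Matrix.vecMul, Matrix.mulVec, dotProduct, Finset.mul_sum, Finset.sum_mul, MinkJ,
      Matrix.diagonal, mul_comm, mul_assoc]
  rw [e2, hm]
  simp
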